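/- For every integer n ≥ 1, all a, b, c, d, s, t ∈ ℝ with a ≤ c, b ≤ d and s ≤ t, and all u⃗, v⃗ ∈ [−∞, ∞)^{n+1} with u_i ≤ v_i for all i, the following inequalities hold (all integrals below are finite and positive): ∫_{−∞}^{s} h_n^{a,u⃗}(x) G(b − x) dx · ∫_{−∞}^{t} h_n^{c,v⃗}(x) G(d − x) dx ≥ ∫_{−∞}^{t} h_n^{a,u⃗}(x) G(b − x) dx · ∫_{−∞}^{s} h_n^{c,v⃗}(x) G(d − x) dx; and in particular ∫_{−∞}^{s} h_n^{a,u⃗}(x) G(b − x) dx · ∫_{−∞}^{∞} h_n^{c,v⃗}(x) G(d − x) dx ≥ ∫_{−∞}^{∞} h_n^{a,u⃗}(x) G(b − x) dx · ∫_{−∞}^{s} h_n^{c,v⃗}(x) G(d − x) dx. -/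

import Mathlib

open MeasureTheory Filter ProbabilityTheory
open scoped ENNReal

noncomputable section
/-- `G = exp (-H^RW)`. -/
def Gof (HRW : ℝ → ℝ) : ℝ → ℝ := fun x => Real.exp (-(HRW x))

/-- The Boltzmann factor `exp (-H t)` for an extended real `t`, with the convention
`exp (-H (-∞)) = 1`. -/
def expNegH (H : ℝ → ℝ) (t : EReal) : ℝ :=
  if t = ⊥ then 1 else if t = ⊤ then 0 else Real.exp (-(H t.toReal))

/-- Normalization of a (finite, nonzero) measure into a probability measure. -/
def normalizeM {α : Type*} [MeasurableSpace α] (μ : Measure α) : Measure α :=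
  (μ Set.univ)⁻¹ • μ

/-- Fill interior coordinates `w` into a path on `ℤ` with boundary values `x` at `a` and `y`
at `b` (constant extension outside `[a,b]`). -/
def fillPath (a b : ℤ) (x y : ℝ) (w : ↥(Finset.Ioo a b : Finset ℤ) → ℝ) : ℤ → ℝ :=
  fun j => if h : j ∈ Finset.Ioo a b then w ⟨j, h⟩ else if j ≤ a then x else y

/-- Random walk density `∏_{m=a+1}^{b} G(ℓ(m) - ℓ(m-1))`. -/
def rwDensity (G : ℝ → ℝ) (a b : ℤ) (ℓ : ℤ → ℝ) : ℝ :=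
  ∏ m ∈ Finset.Ioc a b, G (ℓ m - ℓ (m - 1))

/-- Interaction weight `exp (-∑_{m=a}^{b-1} H(z(m+1) - ℓ(m)))` with a bottom boundary
`z : ℤ → [-∞,∞)`. -/
def interWeight (H : ℝ → ℝ) (a b : ℤ) (z : ℤ → EReal) (ℓ : ℤ → ℝ) : ℝ :=
  ∏ m ∈ Finset.Ico a b, expNegH H (z (m + 1) - ((ℓ m : ℝ) : EReal))

/-- Unnormalized version of the measure `P^{a,b,x,y,z}_{H,H^RW}`. -/
def bridgeLawAux (G H : ℝ → ℝ) (a b : ℤ) (x y : ℝ) (z : ℤ → EReal) : Measure (ℤ → ℝ) :=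
  Measure.map (fillPath a b x y)
    ((volume : Measure (↥(Finset.Ioo a b : Finset ℤ) → ℝ)).withDensity
      fun w => ENNReal.ofReal (rwDensity G a b (fillPath a b x y w) *
        interWeight H a b z (fillPath a b x y w)))

/-- The law `P^{a,b,x,y,z}_{H,H^RW}` of a random walk bridge from `(a,x)` to `(b,y)` with
underlying jump density `G` interacting with the bottom boundary `z` through the
Hamiltonian `H`. -/
def bridgeLaw (G H : ℝ → ℝ) (a b : ℤ) (x y : ℝ) (z : ℤ → EReal) : Measure (ℤ → ℝ) :=
  normalizeM (bridgeLawAux G H a b x y z)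

/-- The law `P^{a,b,x,y}_{H^RW}` of a free random walk bridge from `(a,x)` to `(b,y)`. -/
def freeBridgeLaw (G : ℝ → ℝ) (a b : ℤ) (x y : ℝ) : Measure (ℤ → ℝ) :=
  bridgeLaw G (fun _ => 0) a b x y (fun _ => (⊥ : EReal))

/-- The normalizing constant `Z_{H,H^RW}(a,b,x,y,z)`. -/
def Znorm (G H : ℝ → ℝ) (a b : ℤ) (x y : ℝ) (z : ℤ → EReal) : ℝ :=
  ∫ ℓ, interWeight H a b z ℓ ∂(freeBridgeLaw G a b x y)

/-- The chain of points `x₀ = c, x₁, …, x_{n-1}, x_n = y` appearing in the definition of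
`h_n^{c,z⃗}`. -/
def chainPt (n : ℕ) (c y : ℝ) (w : Fin (n - 1) → ℝ) (i : ℕ) : ℝ :=
  if i = 0 then c else if h : i - 1 < n - 1 then w ⟨i - 1, h⟩ else y

/-- The function `h_n^{c,z⃗}(y)` of Lemma 2.12 (Lemma 2.9): the unnormalized density at `y` of
the endpoint of an interacting random walk started from `c`, with bottom boundary `z⃗`. -/
noncomputable def hFun (HRW H : ℝ → ℝ) (n : ℕ) (c : ℝ) (z : ℕ → EReal) (y : ℝ) : ℝ :=
  ∫ w : Fin (n - 1) → ℝ,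
    ∏ i ∈ Finset.Icc 1 n,
      Gof HRW (chainPt n c y w i - chainPt n c y w (i - 1)) *
        expNegH H (z (i + 1) - ((chainPt n c y w i : ℝ) : EReal))

namespace Stmt6

variable {HRW H : ℝ → ℝ}

lemma gof_nonneg (HRW : ℝ → ℝ) (x : ℝ) : 0 ≤ Gof HRW x := (Real.exp_pos _).le

lemma expNegH_nonneg (H : ℝ → ℝ) (t : EReal) : 0 ≤ expNegH H t := by
  unfold expNegH; split_ifs
  · exact zero_le_one
  · exact le_refl 0
  · exact (Real.exp_pos _).le

lemma expNegH_coe (a : ℝ) : expNegH H ((a : EReal)) = Real.exp (-(H a)) := by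
  simp [expNegH, EReal.coe_ne_bot, EReal.coe_ne_top, EReal.toReal_coe]

lemma expNegH_le_one (hH2 : ∀ x, 0 ≤ H x) (t : EReal) : expNegH H t ≤ 1 := by
  unfold expNegH; split_ifs
  · exact le_refl 1
  · exact zero_le_one
  · exact Real.exp_le_one_iff.mpr (neg_nonpos.mpr (hH2 _))

lemma convex_two {φ : ℝ → ℝ} (hφ : ConvexOn ℝ Set.univ φ) {a b c d : ℝ}
    (hca : c ≤ a) (had : a ≤ d) (hsum : a + b = c + d) :
    φ a + φ b ≤ φ c + φ d := by
  rcases eq_or_lt_of_le (hca.trans had) with h | h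
  · have hac : a = c := le_antisymm (h ▸ had) hca
    have hbd : b = d := by linarith
    rw [hac, hbd]
  · set lam := (d - a) / (d - c) with hlam
    have hdc : 0 < d - c := by linarith
    have h0 : 0 ≤ lam := div_nonneg (by linarith) hdc.le
    have h1 : 0 ≤ 1 - lam := by
      have : lam ≤ 1 := (div_le_one hdc).mpr (by linarith)
      linarith
    have h2 : lam * (d - c) = d - a := div_mul_cancel₀ _ hdc.ne'
    have hp : a = lam * c + (1 - lam) * d := by ring_nf; ring_nf at h2; linarith
    have hq : b = (1 - lam) * c + lam * d := by ring_nf; ring_nf at h2; linarith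
    have c1 := hφ.2 (Set.mem_univ c) (Set.mem_univ d) h0 h1 (by ring)
    have c2 := hφ.2 (Set.mem_univ c) (Set.mem_univ d) h1 h0 (by ring)
    simp only [smul_eq_mul] at c1 c2
    rw [← hp] at c1
    rw [← hq] at c2
    linarith

lemma gof_tp2 (hG2 : ConvexOn ℝ Set.univ HRW) {x y p q : ℝ} (hxy : x ≤ y) (hpq : p ≤ q) :
    Gof HRW (x - q) * Gof HRW (y - p) ≤ Gof HRW (x - p) * Gof HRW (y - q) := by
  unfold Gof
  rw [← Real.exp_add, ← Real.exp_add]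
  apply Real.exp_le_exp.mpr
  have := convex_two hG2 (a := x - p) (b := y - q) (c := x - q) (d := y - p)
    (by linarith) (by linarith) (by ring)
  linarith

lemma expNegH_sub_mono (hH5 : Monotone H) (v : EReal) {x y : ℝ} (hxy : x ≤ y) :
    expNegH H (v - (x : ℝ)) ≤ expNegH H (v - (y : ℝ)) := by
  induction v with
  | bot => rw [EReal.bot_sub, EReal.bot_sub]
  | top => rw [EReal.top_sub_coe, EReal.top_sub_coe]
  | coe a =>
    rw [← EReal.coe_sub, ← EReal.coe_sub, expNegH_coe, expNegH_coe]
    exact Real.exp_le_exp.mpr (neg_le_neg (hH5 (by linarith)))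

lemma expNegH_tp2 (hH2 : ∀ x, 0 ≤ H x) (hH4 : ConvexOn ℝ Set.univ H) (hH5 : Monotone H)
    {u v : EReal} (huv : u ≤ v) {x y : ℝ} (hxy : x ≤ y) :
    expNegH H (u - (y : ℝ)) * expNegH H (v - (x : ℝ)) ≤
      expNegH H (u - (x : ℝ)) * expNegH H (v - (y : ℝ)) := by
  induction u with
  | bot =>
    rw [EReal.bot_sub, EReal.bot_sub]
    have hb : expNegH H ⊥ = 1 := if_pos rfl
    rw [hb, one_mul, one_mul]
    exact expNegH_sub_mono hH5 v hxy
  | top =>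
    have hv : v = ⊤ := top_le_iff.mp huv
    subst hv
    rw [EReal.top_sub_coe, EReal.top_sub_coe]
  | coe a =>
    induction v with
    | bot => exact absurd (le_bot_iff.mp huv) (EReal.coe_ne_bot a)
    | top =>
      rw [EReal.top_sub_coe, EReal.top_sub_coe]
      show _ * expNegH H ⊤ ≤ _ * expNegH H ⊤
      simp [expNegH]
    | coe b =>
      have hab : a ≤ b := EReal.coe_le_coe_iff.mp huv
      rw [← EReal.coe_sub, ← EReal.coe_sub, ← EReal.coe_sub, ← EReal.coe_sub,
        expNegH_coe, expNegH_coe, expNegH_coe, expNegH_coe,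
        ← Real.exp_add, ← Real.exp_add]
      apply Real.exp_le_exp.mpr
      have := convex_two hH4 (a := a - x) (b := b - y) (c := a - y) (d := b - x)
        (by linarith) (by linarith) (by ring)
      linarith


def pint (HRW H : ℝ → ℝ) (n : ℕ) (c : ℝ) (z : ℕ → EReal) (y : ℝ)
    (w : Fin (n - 1) → ℝ) : ℝ :=
  ∏ i ∈ Finset.Icc 1 n, Gof HRW (chainPt n c y w i - chainPt n c y w (i - 1)) *
    expNegH H (z (i + 1) - ((chainPt n c y w i : ℝ) : EReal))

lemma pint_nonneg (n : ℕ) (c : ℝ) (z : ℕ → EReal) (y : ℝ) (w : Fin (n - 1) → ℝ) :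
    0 ≤ pint HRW H n c z y w :=
  Finset.prod_nonneg fun _ _ => mul_nonneg (gof_nonneg _ _) (expNegH_nonneg _ _)

lemma continuous_Gof (hG1 : Continuous HRW) : Continuous (Gof HRW) :=
  Real.continuous_exp.comp hG1.neg

lemma measurable_expNegH_sub (hH1 : Continuous H) (zv : EReal) :
    Measurable fun x : ℝ => expNegH H (zv - (x : ℝ)) := by
  induction zv with
  | bot => simp only [EReal.bot_sub]; exact measurable_const
  | top => simp only [EReal.top_sub_coe]; exact measurable_const
  | coe a =>
    simp_rw [← EReal.coe_sub, expNegH_coe]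
    exact (Real.continuous_exp.comp ((hH1.comp (continuous_const.sub continuous_id)).neg)).measurable

lemma measurable_chainPt (n : ℕ) (c : ℝ) (i : ℕ) :
    Measurable fun p : ℝ × (Fin (n - 1) → ℝ) => chainPt n c p.1 p.2 i := by
  by_cases h0 : i = 0
  · simp only [chainPt, if_pos h0]; exact measurable_const
  · by_cases h1 : i - 1 < n - 1
    · simp only [chainPt, if_neg h0, dif_pos h1]
      exact (measurable_pi_apply _).comp measurable_snd
    · simp only [chainPt, if_neg h0, dif_neg h1]
      exact measurable_fst

lemma measurable_pint (hG1 : Continuous HRW) (hH1 : Continuous H)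
    (n : ℕ) (c : ℝ) (z : ℕ → EReal) :
    Measurable fun p : ℝ × (Fin (n - 1) → ℝ) => pint HRW H n c z p.1 p.2 := by
  unfold pint
  apply Finset.measurable_prod
  intro i _
  apply Measurable.mul
  · exact (continuous_Gof hG1).measurable.comp
      ((measurable_chainPt n c i).sub (measurable_chainPt n c (i - 1)))
  · exact (measurable_expNegH_sub hH1 (z (i + 1))).comp (measurable_chainPt n c i)

lemma measurable_chainPt_y (n : ℕ) (c y : ℝ) (i : ℕ) :
    Measurable fun w : Fin (n - 1) → ℝ => chainPt n c y w i := by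
  by_cases h0 : i = 0
  · simp only [chainPt, if_pos h0]; exact measurable_const
  · by_cases h1 : i - 1 < n - 1
    · simp only [chainPt, if_neg h0, dif_pos h1]
      exact measurable_pi_apply _
    · simp only [chainPt, if_neg h0, dif_neg h1]
      exact measurable_const

lemma measurable_pint_y (hG1 : Continuous HRW) (hH1 : Continuous H)
    (n : ℕ) (c : ℝ) (z : ℕ → EReal) (y : ℝ) :
    Measurable fun w : Fin (n - 1) → ℝ => pint HRW H n c z y w := by
  unfold pint
  apply Finset.measurable_prod
  intro i _
  apply Measurable.mul
  · exact (continuous_Gof hG1).measurable.comp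
      ((measurable_chainPt_y n c y i).sub (measurable_chainPt_y n c y (i - 1)))
  · exact (measurable_expNegH_sub hH1 (z (i + 1))).comp (measurable_chainPt_y n c y i)

def Nlin (HRW H : ℝ → ℝ) (n : ℕ) (c : ℝ) (z : ℕ → EReal) (y : ℝ) : ℝ≥0∞ :=
  ∫⁻ w : Fin (n - 1) → ℝ, ENNReal.ofReal (pint HRW H n c z y w)

lemma measurable_Nlin (hG1 : Continuous HRW) (hH1 : Continuous H)
    (n : ℕ) (c : ℝ) (z : ℕ → EReal) : Measurable (Nlin HRW H n c z) := by
  have h : Measurable (Function.uncurry fun (y : ℝ) (w : Fin (n - 1) → ℝ) =>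
      ENNReal.ofReal (pint HRW H n c z y w)) :=
    ENNReal.measurable_ofReal.comp (measurable_pint hG1 hH1 n c z)
  exact h.lintegral_prod_right

lemma Nlin_one (c : ℝ) (z : ℕ → EReal) (y : ℝ) :
    Nlin HRW H 1 c z y = ENNReal.ofReal (Gof HRW (y - c) * expNegH H (z 2 - (y : ℝ))) := by
  have hpi : ∀ w : Fin 0 → ℝ,
      pint HRW H 1 c z y w = Gof HRW (y - c) * expNegH H (z 2 - (y : ℝ)) := by
    intro w
    unfold pint
    rw [Finset.Icc_self, Finset.prod_singleton]
    have h1 : chainPt 1 c y w 1 = y := by simp [chainPt]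
    have h0 : chainPt 1 c y w 0 = c := by simp [chainPt]
    rw [h1, h0]
  unfold Nlin
  simp_rw [hpi]
  rw [lintegral_const]
  have huniv : (volume : Measure (Fin 0 → ℝ)) Set.univ = 1 := by
    rw [volume_pi, Measure.pi_univ]
    simp
  rw [huniv, mul_one]

lemma pint_succ (k : ℕ) (c : ℝ) (z : ℕ → EReal) (y r : ℝ) (w₀ : Fin k → ℝ) :
    pint HRW H (k + 2) c z y ((Fin.last k).insertNth r w₀) =
      pint HRW H (k + 1) c z r w₀ *
        (Gof HRW (y - r) * expNegH H (z (k + 3) - (y : ℝ))) := by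
  set w : Fin (k + 1) → ℝ := (Fin.last k).insertNth r w₀ with hw
  have hwl : w (Fin.last k) = r :=
    Fin.insertNth_apply_same (α := fun _ : Fin (k + 1) => ℝ) (Fin.last k) r w₀
  have hwc : ∀ j : Fin k, w (Fin.castSucc j) = w₀ j := by
    intro j
    have h := Fin.insertNth_apply_succAbove (α := fun _ : Fin (k + 1) => ℝ)
      (Fin.last k) r w₀ j
    rwa [Fin.succAbove_last_apply] at h
  have chain_eq : ∀ i : ℕ, i ≤ k + 1 →
      chainPt (k + 2) c y w i = chainPt (k + 1) c r w₀ i := by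
    intro i hi
    rcases Nat.eq_zero_or_pos i with h0 | hpos
    · simp [chainPt, h0]
    · have h0' : i ≠ 0 := hpos.ne'
      by_cases h1 : i - 1 < k
      · have h2 : i - 1 < k + 1 := by omega
        simp only [chainPt, if_neg h0']
        rw [dif_pos (show i - 1 < k + 2 - 1 by omega), dif_pos (show i - 1 < k + 1 - 1 by omega)]
        have := hwc ⟨i - 1, h1⟩
        rwa [show (Fin.castSucc ⟨i - 1, h1⟩ : Fin (k + 1)) = ⟨i - 1, by omega⟩ from rfl] at this
      · have h2 : i - 1 = k := by omega
        have h2' : i - 1 < k + 1 := by omega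
        simp only [chainPt, if_neg h0']
        rw [dif_pos (show i - 1 < k + 2 - 1 by omega), dif_neg (show ¬ (i - 1 < k + 1 - 1) by omega)]
        have heq : (⟨i - 1, by omega⟩ : Fin (k + 1)) = Fin.last k := by
          apply Fin.ext; simp [h2]
        rw [heq, hwl]
  have htop : chainPt (k + 2) c y w (k + 2) = y := by
    have h0' : k + 2 ≠ 0 := by omega
    have h1 : ¬ (k + 2 - 1 < k + 2 - 1) := lt_irrefl _
    simp only [chainPt, if_neg h0']
    rw [dif_neg h1]
  have hpen : chainPt (k + 1) c r w₀ (k + 1) = r := by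
    have h0' : k + 1 ≠ 0 := by omega
    have h1 : ¬ (k + 1 - 1 < k + 1 - 1) := lt_irrefl _
    simp only [chainPt, if_neg h0']
    rw [dif_neg h1]
  unfold pint
  rw [Finset.prod_Icc_succ_top (by omega : 1 ≤ k + 2)]
  congr 1
  · apply Finset.prod_congr rfl
    intro i hi
    rw [Finset.mem_Icc] at hi
    rw [chain_eq i hi.2, chain_eq (i - 1) (by omega)]
  · rw [show k + 2 - 1 = k + 1 from rfl, htop, chain_eq (k + 1) le_rfl, hpen]

set_option maxHeartbeats 1000000 in
lemma Nlin_succ (hG1 : Continuous HRW) (hH1 : Continuous H)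
    (k : ℕ) (c : ℝ) (z : ℕ → EReal) (y : ℝ) :
    Nlin HRW H (k + 2) c z y =
      (∫⁻ r : ℝ, Nlin HRW H (k + 1) c z r * ENNReal.ofReal (Gof HRW (y - r))) *
        ENNReal.ofReal (expNegH H (z (k + 3) - (y : ℝ))) := by
  have hFmeas : Measurable fun w : Fin (k + 1) → ℝ =>
      ENNReal.ofReal (pint HRW H (k + 2) c z y w) :=
    ENNReal.measurable_ofReal.comp (measurable_pint_y hG1 hH1 (k + 2) c z y)
  set e := MeasurableEquiv.piFinSuccAbove (fun _ : Fin (k + 1) => ℝ) (Fin.last k) with he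
  have mp := MeasureTheory.volume_preserving_piFinSuccAbove
      (fun _ : Fin (k + 1) => ℝ) (Fin.last k)
  have key := ((mp.symm e).lintegral_comp hFmeas).symm
  have hesymm : ∀ (r : ℝ) (w₀ : Fin k → ℝ),
      e.symm (r, w₀) = (Fin.last k).insertNth r w₀ := by
    intro r w₀
    rw [he, MeasurableEquiv.piFinSuccAbove_symm_apply]
    rfl
  have goal1 : Nlin HRW H (k + 2) c z y =
      ∫⁻ p : ℝ × (Fin k → ℝ), ENNReal.ofReal (pint HRW H (k + 2) c z y (e.symm p)) := key
  have hAE : Measurable fun p : ℝ × (Fin k → ℝ) =>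
      ENNReal.ofReal (pint HRW H (k + 2) c z y (e.symm p)) :=
    hFmeas.comp e.symm.measurable
  rw [goal1, Measure.volume_eq_prod, lintegral_prod _ hAE.aemeasurable]
  have inner : ∀ r : ℝ,
      (∫⁻ w₀ : Fin k → ℝ, ENNReal.ofReal (pint HRW H (k + 2) c z y (e.symm (r, w₀)))) =
      Nlin HRW H (k + 1) c z r *
        (ENNReal.ofReal (Gof HRW (y - r)) *
          ENNReal.ofReal (expNegH H (z (k + 3) - (y : ℝ)))) := by
    intro r
    have hpt : ∀ w₀ : Fin k → ℝ,
        ENNReal.ofReal (pint HRW H (k + 2) c z y (e.symm (r, w₀))) =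
        ENNReal.ofReal (pint HRW H (k + 1) c z r w₀) *
          (ENNReal.ofReal (Gof HRW (y - r)) *
            ENNReal.ofReal (expNegH H (z (k + 3) - (y : ℝ)))) := by
      intro w₀
      rw [hesymm r w₀, pint_succ, ENNReal.ofReal_mul (pint_nonneg _ _ _ _ _),
        ENNReal.ofReal_mul (gof_nonneg _ _)]
    simp_rw [hpt]
    rw [lintegral_mul_const' _ _
      (ENNReal.mul_ne_top ENNReal.ofReal_ne_top ENNReal.ofReal_ne_top)]
    rfl
  simp_rw [inner]
  rw [← lintegral_mul_const' _ _ ENNReal.ofReal_ne_top]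
  congr 1
  funext r
  rw [← mul_assoc]


lemma rearr {a b c d : ℝ≥0∞} (hab : a ≤ b) (hcd : c ≤ d) : a * d + b * c ≤ a * c + b * d := by
  obtain ⟨e, rfl⟩ := exists_add_of_le hab
  obtain ⟨f, rfl⟩ := exists_add_of_le hcd
  calc a * (c + f) + (a + e) * c = (a * c + a * c + a * f + e * c) := by ring
    _ ≤ (a * c + a * c + a * f + e * c) + e * f := le_self_add
    _ = a * c + (a + e) * (c + f) := by ring

lemma integrable_Gof (hG4 : ∫ x : ℝ, Gof HRW x = 1) : Integrable (Gof HRW) := by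
  by_contra h
  rw [integral_undef h] at hG4
  exact one_ne_zero hG4.symm

lemma lintegral_Gof (hG4 : ∫ x : ℝ, Gof HRW x = 1) :
    ∫⁻ x : ℝ, ENNReal.ofReal (Gof HRW x) = 1 := by
  rw [← ofReal_integral_eq_lintegral_ofReal (integrable_Gof hG4)
    (Filter.Eventually.of_forall fun x => gof_nonneg _ x), hG4, ENNReal.ofReal_one]

lemma lintegral_Gof_sub (hG1 : Continuous HRW) (hG4 : ∫ x : ℝ, Gof HRW x = 1) (y : ℝ) :
    ∫⁻ r : ℝ, ENNReal.ofReal (Gof HRW (y - r)) = 1 := by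
  have mp := Measure.measurePreserving_sub_left (volume : Measure ℝ) y
  have hmeas : Measurable fun x : ℝ => ENNReal.ofReal (Gof HRW x) :=
    ENNReal.measurable_ofReal.comp (continuous_Gof hG1).measurable
  rw [show (∫⁻ r : ℝ, ENNReal.ofReal (Gof HRW (y - r))) =
    ∫⁻ x : ℝ, ENNReal.ofReal (Gof HRW x) from mp.lintegral_comp hmeas, lintegral_Gof hG4]

lemma Nlin_le {C : ℝ} (hG1 : Continuous HRW) (hH1 : Continuous H)
    (hH2 : ∀ x, 0 ≤ H x) (hG3C : ∀ x, Gof HRW x ≤ C) (hG4 : ∫ x : ℝ, Gof HRW x = 1) :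
    ∀ (k : ℕ) (c : ℝ) (z : ℕ → EReal) (y : ℝ),
      Nlin HRW H (k + 1) c z y ≤ ENNReal.ofReal C := by
  intro k
  induction k with
  | zero =>
    intro c z y
    rw [Nlin_one]
    apply ENNReal.ofReal_le_ofReal
    calc Gof HRW (y - c) * expNegH H (z 2 - (y : ℝ))
        ≤ Gof HRW (y - c) := mul_le_of_le_one_right (gof_nonneg _ _) (expNegH_le_one hH2 _)
      _ ≤ C := hG3C _
  | succ m ih =>
    intro c z y
    show Nlin HRW H (m + 2) c z y ≤ ENNReal.ofReal C
    rw [Nlin_succ hG1 hH1]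
    calc (∫⁻ r : ℝ, Nlin HRW H (m + 1) c z r * ENNReal.ofReal (Gof HRW (y - r))) *
          ENNReal.ofReal (expNegH H (z (m + 3) - (y : ℝ)))
        ≤ (∫⁻ r : ℝ, ENNReal.ofReal C * ENNReal.ofReal (Gof HRW (y - r))) * 1 := by
          apply mul_le_mul'
          · exact lintegral_mono fun r => mul_le_mul_left (ih c z r) _
          · rw [← ENNReal.ofReal_one]
            exact ENNReal.ofReal_le_ofReal (expNegH_le_one hH2 _)
      _ = ENNReal.ofReal C := by
          rw [lintegral_const_mul' _ _ ENNReal.ofReal_ne_top, lintegral_Gof_sub hG1 hG4,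
            mul_one, mul_one]

lemma comp_tp2 (hG1 : Continuous HRW) (hG2 : ConvexOn ℝ Set.univ HRW)
    {f g : ℝ → ℝ≥0∞} (hf : Measurable f) (hg : Measurable g)
    (hfg : ∀ r r', r ≤ r' → f r' * g r ≤ f r * g r')
    {x y : ℝ} (hxy : x ≤ y) :
    (∫⁻ r, f r * ENNReal.ofReal (Gof HRW (y - r))) *
      (∫⁻ r, g r * ENNReal.ofReal (Gof HRW (x - r))) ≤
    (∫⁻ r, f r * ENNReal.ofReal (Gof HRW (x - r))) *
      (∫⁻ r, g r * ENNReal.ofReal (Gof HRW (y - r))) := by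
  have hKm : ∀ t : ℝ, Measurable fun r : ℝ => ENNReal.ofReal (Gof HRW (t - r)) := fun t =>
    ENNReal.measurable_ofReal.comp
      ((continuous_Gof hG1).measurable.comp (measurable_const.sub measurable_id))
  have h1 : ∀ (φ ψ : ℝ → ℝ≥0∞), Measurable φ → Measurable ψ →
      (∫⁻ r, φ r) * (∫⁻ r, ψ r) =
        ∫⁻ p : ℝ × ℝ, φ p.1 * ψ p.2 ∂((volume : Measure ℝ).prod volume) :=
    fun φ ψ hφ hψ => (lintegral_prod_mul hφ.aemeasurable hψ.aemeasurable).symm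
  rw [h1 (fun r => f r * ENNReal.ofReal (Gof HRW (y - r))) (fun r => g r * ENNReal.ofReal (Gof HRW (x - r))) (hf.mul (hKm y)) (hg.mul (hKm x)),
    h1 (fun r => f r * ENNReal.ofReal (Gof HRW (x - r))) (fun r => g r * ENNReal.ofReal (Gof HRW (y - r))) (hf.mul (hKm x)) (hg.mul (hKm y))]
  set L : ℝ × ℝ → ℝ≥0∞ := fun p =>
    (f p.1 * ENNReal.ofReal (Gof HRW (y - p.1))) *
      (g p.2 * ENNReal.ofReal (Gof HRW (x - p.2))) with hLdef
  set R : ℝ × ℝ → ℝ≥0∞ := fun p =>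
    (f p.1 * ENNReal.ofReal (Gof HRW (x - p.1))) *
      (g p.2 * ENNReal.ofReal (Gof HRW (y - p.2))) with hRdef
  have hLm : Measurable L := ((hf.comp measurable_fst).mul ((hKm y).comp measurable_fst)).mul
    ((hg.comp measurable_snd).mul ((hKm x).comp measurable_snd))
  have hRm : Measurable R := ((hf.comp measurable_fst).mul ((hKm x).comp measurable_fst)).mul
    ((hg.comp measurable_snd).mul ((hKm y).comp measurable_snd))
  have swap_eq : ∀ (Φ : ℝ × ℝ → ℝ≥0∞), Measurable Φ →
      (∫⁻ p, Φ (Prod.swap p) ∂((volume : Measure ℝ).prod volume)) =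
        ∫⁻ p, Φ p ∂((volume : Measure ℝ).prod volume) := by
    intro Φ hΦ
    rw [← lintegral_map hΦ measurable_swap, Measure.prod_swap]
  have hpt : ∀ r r', r ≤ r' → L (r, r') + L (r', r) ≤ R (r, r') + R (r', r) := by
    intro r r' hrr'
    have hFF : f r' * g r ≤ f r * g r' := hfg r r' hrr'
    have hK2 : ENNReal.ofReal (Gof HRW (y - r)) * ENNReal.ofReal (Gof HRW (x - r')) ≤
        ENNReal.ofReal (Gof HRW (x - r)) * ENNReal.ofReal (Gof HRW (y - r')) := by
      rw [← ENNReal.ofReal_mul (gof_nonneg _ _), ← ENNReal.ofReal_mul (gof_nonneg _ _)]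
      apply ENNReal.ofReal_le_ofReal
      have h := gof_tp2 (HRW := HRW) hG2 hxy hrr'
      calc Gof HRW (y - r) * Gof HRW (x - r') = Gof HRW (x - r') * Gof HRW (y - r) := by ring
        _ ≤ Gof HRW (x - r) * Gof HRW (y - r') := h
    have hre := rearr (a := f r' * g r) (b := f r * g r')
      (c := ENNReal.ofReal (Gof HRW (y - r)) * ENNReal.ofReal (Gof HRW (x - r')))
      (d := ENNReal.ofReal (Gof HRW (x - r)) * ENNReal.ofReal (Gof HRW (y - r'))) hFF hK2
    calc L (r, r') + L (r', r)
        = (f r' * g r) * (ENNReal.ofReal (Gof HRW (x - r)) * ENNReal.ofReal (Gof HRW (y - r'))) +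
          (f r * g r') * (ENNReal.ofReal (Gof HRW (y - r)) * ENNReal.ofReal (Gof HRW (x - r'))) := by
          rw [hLdef]; ring
      _ ≤ (f r' * g r) * (ENNReal.ofReal (Gof HRW (y - r)) * ENNReal.ofReal (Gof HRW (x - r'))) +
          (f r * g r') * (ENNReal.ofReal (Gof HRW (x - r)) * ENNReal.ofReal (Gof HRW (y - r'))) := hre
      _ = R (r, r') + R (r', r) := by rw [hRdef]; ring
  have hLL : (∫⁻ p, (L p + L (Prod.swap p)) ∂((volume : Measure ℝ).prod volume)) =
      (∫⁻ p, L p ∂((volume : Measure ℝ).prod volume)) +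
        (∫⁻ p, L p ∂((volume : Measure ℝ).prod volume)) := by
    rw [lintegral_add_left hLm, swap_eq L hLm]
  have hRR : (∫⁻ p, (R p + R (Prod.swap p)) ∂((volume : Measure ℝ).prod volume)) =
      (∫⁻ p, R p ∂((volume : Measure ℝ).prod volume)) +
        (∫⁻ p, R p ∂((volume : Measure ℝ).prod volume)) := by
    rw [lintegral_add_left hRm, swap_eq R hRm]
  have key : (∫⁻ p, L p ∂((volume : Measure ℝ).prod volume)) +
      (∫⁻ p, L p ∂((volume : Measure ℝ).prod volume)) ≤
      (∫⁻ p, R p ∂((volume : Measure ℝ).prod volume)) +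
        (∫⁻ p, R p ∂((volume : Measure ℝ).prod volume)) := by
    rw [← hLL, ← hRR]
    apply lintegral_mono
    rintro ⟨r, r'⟩
    rcases le_total r r' with h | h
    · exact hpt r r' h
    · have h2 := hpt r' r h
      show L (r, r') + L (Prod.swap (r, r')) ≤ R (r, r') + R (Prod.swap (r, r'))
      rw [Prod.swap_prod_mk]
      rw [add_comm] at h2
      rw [add_comm (R (r',r)) (R (r,r'))] at h2
      exact h2
  have h2 : (2 : ℝ≥0∞) * (∫⁻ p, L p ∂((volume : Measure ℝ).prod volume)) ≤
      2 * ∫⁻ p, R p ∂((volume : Measure ℝ).prod volume) := by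
    rw [two_mul, two_mul]; exact key
  exact (ENNReal.mul_le_mul_iff_right (by norm_num) (by norm_num)).mp h2

lemma cross {f g : ℝ → ℝ≥0∞} (hf : Measurable f) (hg : Measurable g)
    {S T' : Set ℝ} (hS : MeasurableSet S) (hT' : MeasurableSet T')
    (hp : ∀ x ∈ S, ∀ y ∈ T', f y * g x ≤ f x * g y) :
    (∫⁻ x in T', f x) * (∫⁻ x in S, g x) ≤ (∫⁻ x in S, f x) * (∫⁻ x in T', g x) := by
  rw [← lintegral_prod_mul hf.aemeasurable hg.aemeasurable,
    ← lintegral_prod_mul hf.aemeasurable hg.aemeasurable]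
  have hm : Measurable fun z : ℝ × ℝ => f z.1 * g z.2 :=
    (hf.comp measurable_fst).mul (hg.comp measurable_snd)
  have hswap : ((volume : Measure ℝ).restrict T').prod ((volume : Measure ℝ).restrict S) =
      Measure.map Prod.swap (((volume : Measure ℝ).restrict S).prod
        ((volume : Measure ℝ).restrict T')) := (Measure.prod_swap).symm
  rw [hswap, lintegral_map hm measurable_swap]
  have hmem : ∀ᵐ z ∂(((volume : Measure ℝ).restrict S).prod
      ((volume : Measure ℝ).restrict T')), z ∈ S ×ˢ T' := by
    rw [Measure.prod_restrict]
    exact ae_restrict_mem (hS.prod hT')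
  refine lintegral_mono_ae (hmem.mono ?_)
  rintro ⟨x, y⟩ ⟨hx, hy⟩
  exact hp x hx y hy

lemma main_ineq {f g : ℝ → ℝ≥0∞} (hf : Measurable f) (hg : Measurable g)
    {S T' : Set ℝ} (hS : MeasurableSet S) (hT' : MeasurableSet T')
    (hdisj : Disjoint S T')
    (hp : ∀ x ∈ S, ∀ y ∈ T', f y * g x ≤ f x * g y) :
    (∫⁻ x in S ∪ T', f x) * (∫⁻ x in S, g x) ≤
      (∫⁻ x in S, f x) * (∫⁻ x in S ∪ T', g x) := by
  rw [lintegral_union hT' hdisj, lintegral_union hT' hdisj, add_mul, mul_add]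
  exact add_le_add (le_refl _) (cross hf hg hS hT' hp)


lemma Nlin_tp2 (hG1 : Continuous HRW) (hH1 : Continuous H) (hG2 : ConvexOn ℝ Set.univ HRW)
    (hH2 : ∀ x, 0 ≤ H x) (hH4 : ConvexOn ℝ Set.univ H) (hH5 : Monotone H)
    {a c : ℝ} (hac : a ≤ c) {u v : ℕ → EReal} (huv : ∀ i, u i ≤ v i) :
    ∀ (k : ℕ) {x y : ℝ}, x ≤ y →
      Nlin HRW H (k + 1) a u y * Nlin HRW H (k + 1) c v x ≤
        Nlin HRW H (k + 1) a u x * Nlin HRW H (k + 1) c v y := by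
  intro k
  induction k with
  | zero =>
    intro x y hxy
    rw [Nlin_one, Nlin_one, Nlin_one, Nlin_one,
      ← ENNReal.ofReal_mul (mul_nonneg (gof_nonneg _ _) (expNegH_nonneg _ _)),
      ← ENNReal.ofReal_mul (mul_nonneg (gof_nonneg _ _) (expNegH_nonneg _ _))]
    apply ENNReal.ofReal_le_ofReal
    have h1 : Gof HRW (x - c) * Gof HRW (y - a) ≤ Gof HRW (x - a) * Gof HRW (y - c) :=
      gof_tp2 hG2 hxy hac
    have h2 := expNegH_tp2 (H := H) hH2 hH4 hH5 (huv 2) hxy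
    have h3 := mul_le_mul h1 h2
      (mul_nonneg (expNegH_nonneg _ _) (expNegH_nonneg _ _))
      (mul_nonneg (gof_nonneg _ _) (gof_nonneg _ _))
    calc Gof HRW (y - a) * expNegH H (u 2 - (y : ℝ)) *
          (Gof HRW (x - c) * expNegH H (v 2 - (x : ℝ)))
        = (Gof HRW (x - c) * Gof HRW (y - a)) *
            (expNegH H (u 2 - (y : ℝ)) * expNegH H (v 2 - (x : ℝ))) := by ring
      _ ≤ (Gof HRW (x - a) * Gof HRW (y - c)) *
            (expNegH H (u 2 - (x : ℝ)) * expNegH H (v 2 - (y : ℝ))) := h3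
      _ = Gof HRW (x - a) * expNegH H (u 2 - (x : ℝ)) *
            (Gof HRW (y - c) * expNegH H (v 2 - (y : ℝ))) := by ring
  | succ m ih =>
    intro x y hxy
    show Nlin HRW H (m + 2) a u y * Nlin HRW H (m + 2) c v x ≤
      Nlin HRW H (m + 2) a u x * Nlin HRW H (m + 2) c v y
    rw [Nlin_succ hG1 hH1, Nlin_succ hG1 hH1, Nlin_succ hG1 hH1, Nlin_succ hG1 hH1]
    have hI := comp_tp2 hG1 hG2 (measurable_Nlin hG1 hH1 (m + 1) a u)
      (measurable_Nlin hG1 hH1 (m + 1) c v) (fun r r' h => ih h) hxy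
    have hE : ENNReal.ofReal (expNegH H (u (m + 3) - (y : ℝ))) *
        ENNReal.ofReal (expNegH H (v (m + 3) - (x : ℝ))) ≤
        ENNReal.ofReal (expNegH H (u (m + 3) - (x : ℝ))) *
          ENNReal.ofReal (expNegH H (v (m + 3) - (y : ℝ))) := by
      rw [← ENNReal.ofReal_mul (expNegH_nonneg _ _), ← ENNReal.ofReal_mul (expNegH_nonneg _ _)]
      exact ENNReal.ofReal_le_ofReal (expNegH_tp2 hH2 hH4 hH5 (huv (m + 3)) hxy)
    calc (∫⁻ r, Nlin HRW H (m + 1) a u r * ENNReal.ofReal (Gof HRW (y - r))) *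
          ENNReal.ofReal (expNegH H (u (m + 3) - (y : ℝ))) *
        ((∫⁻ r, Nlin HRW H (m + 1) c v r * ENNReal.ofReal (Gof HRW (x - r))) *
          ENNReal.ofReal (expNegH H (v (m + 3) - (x : ℝ))))
        = ((∫⁻ r, Nlin HRW H (m + 1) a u r * ENNReal.ofReal (Gof HRW (y - r))) *
            (∫⁻ r, Nlin HRW H (m + 1) c v r * ENNReal.ofReal (Gof HRW (x - r)))) *
          (ENNReal.ofReal (expNegH H (u (m + 3) - (y : ℝ))) *
            ENNReal.ofReal (expNegH H (v (m + 3) - (x : ℝ)))) := by ring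
      _ ≤ ((∫⁻ r, Nlin HRW H (m + 1) a u r * ENNReal.ofReal (Gof HRW (x - r))) *
            (∫⁻ r, Nlin HRW H (m + 1) c v r * ENNReal.ofReal (Gof HRW (y - r)))) *
          (ENNReal.ofReal (expNegH H (u (m + 3) - (x : ℝ))) *
            ENNReal.ofReal (expNegH H (v (m + 3) - (y : ℝ)))) := mul_le_mul' hI hE
      _ = (∫⁻ r, Nlin HRW H (m + 1) a u r * ENNReal.ofReal (Gof HRW (x - r))) *
          ENNReal.ofReal (expNegH H (u (m + 3) - (x : ℝ))) *
        ((∫⁻ r, Nlin HRW H (m + 1) c v r * ENNReal.ofReal (Gof HRW (y - r))) *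
          ENNReal.ofReal (expNegH H (v (m + 3) - (y : ℝ)))) := by ring


lemma hFun_eq (hG1 : Continuous HRW) (hH1 : Continuous H) (n : ℕ) (c : ℝ)
    (z : ℕ → EReal) (y : ℝ) :
    hFun HRW H n c z y = (Nlin HRW H n c z y).toReal := by
  have h0 : hFun HRW H n c z y = ∫ w : Fin (n - 1) → ℝ, pint HRW H n c z y w := rfl
  rw [h0, integral_eq_lintegral_of_nonneg_ae
    (Filter.Eventually.of_forall fun w => pint_nonneg n c z y w)
    (measurable_pint_y hG1 hH1 n c z y).aestronglyMeasurable]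
  rfl

end Stmt6

/-- Lemma 2.12 (Lemma 2.9): monotonicity of the conditional cumulative distribution
functions built out of `h_n^{c,z⃗}` with respect to the boundary data, in the form of a
correlation inequality. -/
theorem statement6 (HRW H : ℝ → ℝ)
    (hG1 : Continuous HRW) (hG2 : ConvexOn ℝ Set.univ HRW)
    (hG3 : ∃ C : ℝ, ∀ x, Gof HRW x ≤ C) (hG4 : ∫ x : ℝ, Gof HRW x = 1)
    (hH1 : Continuous H) (hH2 : ∀ x, 0 ≤ H x) (hH3 : Tendsto H atBot (nhds 0))
    (hH4 : ConvexOn ℝ Set.univ H) (hH5 : Monotone H)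
    (n : ℕ) (hn : 1 ≤ n) (a b c d s t : ℝ) (hac : a ≤ c) (hbd : b ≤ d) (hst : s ≤ t)
    (u v : ℕ → EReal) (hu : ∀ i, u i ≠ ⊤) (hv : ∀ i, v i ≠ ⊤) (huv : ∀ i, u i ≤ v i) :
    (∫ x in Set.Iic s, hFun HRW H n a u x * Gof HRW (b - x)) *
        (∫ x in Set.Iic t, hFun HRW H n c v x * Gof HRW (d - x)) ≥
      (∫ x in Set.Iic t, hFun HRW H n a u x * Gof HRW (b - x)) *
        (∫ x in Set.Iic s, hFun HRW H n c v x * Gof HRW (d - x)) ∧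
    (∫ x in Set.Iic s, hFun HRW H n a u x * Gof HRW (b - x)) *
        (∫ x : ℝ, hFun HRW H n c v x * Gof HRW (d - x)) ≥
      (∫ x : ℝ, hFun HRW H n a u x * Gof HRW (b - x)) *
        (∫ x in Set.Iic s, hFun HRW H n c v x * Gof HRW (d - x)) := by
  classical
  obtain ⟨C, hC⟩ := hG3
  obtain ⟨k, rfl⟩ : ∃ k, n = k + 1 := ⟨n - 1, (Nat.succ_pred_eq_of_pos hn).symm⟩
  have hKb : ∀ e : ℝ, Measurable fun x : ℝ => ENNReal.ofReal (Gof HRW (e - x)) := fun e =>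
    ENNReal.measurable_ofReal.comp
      ((Stmt6.continuous_Gof hG1).measurable.comp (measurable_const.sub measurable_id))
  set F : ℝ → ℝ≥0∞ := fun x =>
    Stmt6.Nlin HRW H (k + 1) a u x * ENNReal.ofReal (Gof HRW (b - x)) with hF
  set Gm : ℝ → ℝ≥0∞ := fun x =>
    Stmt6.Nlin HRW H (k + 1) c v x * ENNReal.ofReal (Gof HRW (d - x)) with hGm
  have hFm : Measurable F := (Stmt6.measurable_Nlin hG1 hH1 _ a u).mul (hKb b)
  have hGmm : Measurable Gm := (Stmt6.measurable_Nlin hG1 hH1 _ c v).mul (hKb d)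
  have hne : ∀ (c' : ℝ) (z' : ℕ → EReal) (x : ℝ), Stmt6.Nlin HRW H (k + 1) c' z' x ≠ ⊤ :=
    fun c' z' x => ((Stmt6.Nlin_le hG1 hH1 hH2 hC hG4 k c' z' x).trans_lt
      ENNReal.ofReal_lt_top).ne
  have conv : ∀ (μ : Measure ℝ) (c' b' : ℝ) (z' : ℕ → EReal),
      (∫ x, hFun HRW H (k + 1) c' z' x * Gof HRW (b' - x) ∂μ) =
        (∫⁻ x, Stmt6.Nlin HRW H (k + 1) c' z' x *
          ENNReal.ofReal (Gof HRW (b' - x)) ∂μ).toReal := by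
    intro μ c' b' z'
    rw [integral_eq_lintegral_of_nonneg_ae
      (Filter.Eventually.of_forall fun x => mul_nonneg
        (by rw [Stmt6.hFun_eq hG1 hH1]; exact ENNReal.toReal_nonneg) (Stmt6.gof_nonneg _ _))
      (by
        apply Measurable.aestronglyMeasurable
        apply Measurable.mul
        · have hfe : hFun HRW H (k + 1) c' z' =
              fun x => (Stmt6.Nlin HRW H (k + 1) c' z' x).toReal :=
            funext fun x => Stmt6.hFun_eq hG1 hH1 _ _ _ _
          rw [hfe]
          exact (Stmt6.measurable_Nlin hG1 hH1 _ _ _).ennreal_toReal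
        · exact (Stmt6.continuous_Gof hG1).measurable.comp
            (measurable_const.sub measurable_id))]
    congr 1
    apply lintegral_congr
    intro x
    rw [Stmt6.hFun_eq hG1 hH1, ENNReal.ofReal_mul ENNReal.toReal_nonneg,
      ENNReal.ofReal_toReal (hne c' z' x)]
  have hfull : ∀ (c' b' : ℝ) (z' : ℕ → EReal),
      (∫⁻ x, Stmt6.Nlin HRW H (k + 1) c' z' x * ENNReal.ofReal (Gof HRW (b' - x))) ≠ ⊤ := by
    intro c' b' z'
    have hle : (∫⁻ x, Stmt6.Nlin HRW H (k + 1) c' z' x * ENNReal.ofReal (Gof HRW (b' - x)))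
        ≤ ENNReal.ofReal C * 1 := by
      calc (∫⁻ x, Stmt6.Nlin HRW H (k + 1) c' z' x * ENNReal.ofReal (Gof HRW (b' - x)))
          ≤ ∫⁻ x, ENNReal.ofReal C * ENNReal.ofReal (Gof HRW (b' - x)) :=
            lintegral_mono fun x =>
              mul_le_mul_left (Stmt6.Nlin_le hG1 hH1 hH2 hC hG4 k c' z' x) _
        _ = ENNReal.ofReal C * ∫⁻ x, ENNReal.ofReal (Gof HRW (b' - x)) :=
            lintegral_const_mul' _ _ ENNReal.ofReal_ne_top
        _ = ENNReal.ofReal C * 1 := by rw [Stmt6.lintegral_Gof_sub hG1 hG4]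
    exact ((hle.trans_lt (by simp [ENNReal.ofReal_lt_top])).ne)
  have hrestr : ∀ (S : Set ℝ) (c' b' : ℝ) (z' : ℕ → EReal),
      (∫⁻ x in S, Stmt6.Nlin HRW H (k + 1) c' z' x *
        ENNReal.ofReal (Gof HRW (b' - x))) ≠ ⊤ := by
    intro S c' b' z'
    exact ((lintegral_mono' Measure.restrict_le_self le_rfl).trans_lt
      (lt_top_iff_ne_top.mpr (hfull c' b' z'))).ne
  have hptF : ∀ x y : ℝ, x ≤ y → F y * Gm x ≤ F x * Gm y := by
    intro x y hxy
    have h1 := Stmt6.Nlin_tp2 hG1 hH1 hG2 hH2 hH4 hH5 hac huv k hxy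
    have h2 : ENNReal.ofReal (Gof HRW (b - y)) * ENNReal.ofReal (Gof HRW (d - x)) ≤
        ENNReal.ofReal (Gof HRW (b - x)) * ENNReal.ofReal (Gof HRW (d - y)) := by
      rw [← ENNReal.ofReal_mul (Stmt6.gof_nonneg _ _),
        ← ENNReal.ofReal_mul (Stmt6.gof_nonneg _ _)]
      exact ENNReal.ofReal_le_ofReal (Stmt6.gof_tp2 hG2 hbd hxy)
    calc F y * Gm x
        = (Stmt6.Nlin HRW H (k + 1) a u y * Stmt6.Nlin HRW H (k + 1) c v x) *
            (ENNReal.ofReal (Gof HRW (b - y)) * ENNReal.ofReal (Gof HRW (d - x))) := by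
          rw [hF, hGm]; ring
      _ ≤ (Stmt6.Nlin HRW H (k + 1) a u x * Stmt6.Nlin HRW H (k + 1) c v y) *
            (ENNReal.ofReal (Gof HRW (b - x)) * ENNReal.ofReal (Gof HRW (d - y))) :=
          mul_le_mul' h1 h2
      _ = F x * Gm y := by rw [hF, hGm]; ring
  have main1 : (∫⁻ x in Set.Iic t, F x) * (∫⁻ x in Set.Iic s, Gm x) ≤
      (∫⁻ x in Set.Iic s, F x) * (∫⁻ x in Set.Iic t, Gm x) := by
    have hu1 : Set.Iic t = Set.Iic s ∪ Set.Ioc s t := (Set.Iic_union_Ioc_eq_Iic hst).symm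
    rw [hu1]
    apply Stmt6.main_ineq hFm hGmm measurableSet_Iic measurableSet_Ioc
    · rw [Set.disjoint_left]
      intro x hx hx2
      exact absurd hx2.1 (not_lt.mpr hx)
    · intro x hx y hy
      exact hptF x y (le_of_lt (lt_of_le_of_lt hx hy.1))
  have main2 : (∫⁻ x, F x) * (∫⁻ x in Set.Iic s, Gm x) ≤
      (∫⁻ x in Set.Iic s, F x) * (∫⁻ x, Gm x) := by
    have hu2 : ∀ (φ : ℝ → ℝ≥0∞), (∫⁻ x, φ x) = ∫⁻ x in Set.Iic s ∪ Set.Ioi s, φ x := by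
      intro φ
      rw [Set.Iic_union_Ioi, Measure.restrict_univ]
    rw [hu2 F, hu2 Gm]
    apply Stmt6.main_ineq hFm hGmm measurableSet_Iic measurableSet_Ioi
    · rw [Set.disjoint_left]
      intro x hx hx2
      exact absurd (Set.mem_Ioi.mp hx2) (not_lt.mpr hx)
    · intro x hx y hy
      exact hptF x y (le_of_lt (lt_of_le_of_lt hx (Set.mem_Ioi.mp hy)))
  constructor
  · rw [ge_iff_le, conv, conv, conv, conv, ← ENNReal.toReal_mul, ← ENNReal.toReal_mul]
    exact ENNReal.toReal_mono
      (ENNReal.mul_ne_top (hrestr _ a b u) (hrestr _ c d v)) main1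
  · rw [ge_iff_le, conv, conv, conv, conv, ← ENNReal.toReal_mul, ← ENNReal.toReal_mul]
    exact ENNReal.toReal_mono
      (ENNReal.mul_ne_top (hrestr _ a b u) (hfull c d v)) main2
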